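/- Let E be a finite-dimensional real normed vector space and let S be a set of maps from E to E, each of which is continuously differentiable (C^1). Then for every natural number m, the set of points p ∈ E such that f(p) = p for every f ∈ S and the linear subspace {v ∈ E : Df_p(v) = v for all f ∈ S} has dimension at least m, is a closed subset of E. (Upper semi-continuity of the fixed rank.) -/

import Mathlib

open Filter Topology

/-- Upper semi-continuity of the fixed rank: for a set `S` of `C¹` self-maps of a
finite-dimensional real normed space `E` and any `m`, the set of points `p` fixed by every
`f ∈ S` at which the subspace `{v | Df_p v = v for all f ∈ S}` has dimension at least `m`
is closed. -/
theorem fixedRank_isClosed (E : Type*) [NormedAddCommGroup E] [NormedSpace ℝ E]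
    [FiniteDimensional ℝ E] (S : Set (E → E)) (hS : ∀ f ∈ S, ContDiff ℝ 1 f) (m : ℕ) :
    IsClosed {p : E | (∀ f ∈ S, f p = p) ∧
      m ≤ Module.finrank ℝ
        ↥(⨅ f ∈ S, LinearMap.ker ((fderiv ℝ f p).toLinearMap - LinearMap.id))} := by
  set F := EuclideanSpace ℝ (Fin (Module.finrank ℝ E))
  set e : E ≃L[ℝ] F := toEuclidean
  -- membership in the subspace unfolded
  have memK : ∀ (p v : E),
      v ∈ (⨅ f ∈ S, LinearMap.ker ((fderiv ℝ f p).toLinearMap - LinearMap.id)) ↔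
      ∀ f ∈ S, fderiv ℝ f p v = v := by
    intro p v
    simp [Submodule.mem_iInf, LinearMap.mem_ker, sub_eq_zero]
  apply IsSeqClosed.isClosed
  intro q p hq hqp
  -- fixed point part
  have hfix : ∀ f ∈ S, f p = p := by
    intro f hf
    have h1 : Tendsto (fun n => f (q n)) atTop (𝓝 (f p)) :=
      ((hS f hf).continuous.tendsto p).comp hqp
    have h2 : Tendsto (fun n => f (q n)) atTop (𝓝 p) := by
      simpa only [(hq · |>.1 f hf)] using hqp
    exact tendsto_nhds_unique h1 h2
  refine ⟨hfix, ?_⟩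
  -- for each n pick an orthonormal m-tuple in the image of the kernel space in F
  set K : E → Submodule ℝ E :=
    fun p => ⨅ f ∈ S, LinearMap.ker ((fderiv ℝ f p).toLinearMap - LinearMap.id) with hK
  have hrank : ∀ n, m ≤ Module.finrank ℝ ↥((K (q n)).map (e.toLinearEquiv : E →ₗ[ℝ] F)) := by
    intro n
    rw [LinearEquiv.finrank_map_eq]
    exact (hq n).2
  set v : ℕ → Fin m → F := fun n i =>
    ((stdOrthonormalBasis ℝ ↥((K (q n)).map (e.toLinearEquiv : E →ₗ[ℝ] F))) (Fin.castLE (by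
      simpa using hrank n) i) : F) with hv
  have hvon : ∀ n, Orthonormal ℝ (v n) := by
    intro n
    have := (stdOrthonormalBasis ℝ ↥((K (q n)).map (e.toLinearEquiv : E →ₗ[ℝ] F))).orthonormal
    have h2 := this.comp_linearIsometry ((K (q n)).map (e.toLinearEquiv : E →ₗ[ℝ] F)).subtypeₗᵢ
    exact h2.comp _ (Fin.castLE_injective _)
  have hvmem : ∀ n i, v n i ∈ (K (q n)).map (e.toLinearEquiv : E →ₗ[ℝ] F) := fun n i =>
    SetLike.coe_mem _
  -- compactness: extract a convergent subsequence
  have hball : ∀ n, v n ∈ Metric.closedBall (0 : Fin m → F) 1 := by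
    intro n
    rw [Metric.mem_closedBall, dist_zero_right]
    refine (pi_norm_le_iff_of_nonneg zero_le_one).2 fun i => ?_
    rw [(hvon n).1 i]
  obtain ⟨a, -, φ, hφ, hconv⟩ :=
    (isCompact_closedBall (0 : Fin m → F) 1).tendsto_subseq hball
  have hconv' : ∀ i, Tendsto (fun n => v (φ n) i) atTop (𝓝 (a i)) := fun i =>
    (continuous_apply i).continuousAt.tendsto.comp hconv
  -- the limit tuple is orthonormal
  have haon : Orthonormal ℝ a := by
    rw [orthonormal_iff_ite]
    intro i j
    have h1 : Tendsto (fun n => (inner ℝ (v (φ n) i) (v (φ n) j) : ℝ)) atTop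
        (𝓝 (inner ℝ (a i) (a j))) := (hconv' i).inner (hconv' j)
    have h2 : ∀ n, (inner ℝ (v (φ n) i) (v (φ n) j) : ℝ) = if i = j then 1 else 0 := by
      intro n
      rw [orthonormal_iff_ite.1 (hvon (φ n)) i j]
    rw [funext h2] at h1
    exact tendsto_nhds_unique h1 tendsto_const_nhds
  -- the pulled-back limit vectors lie in K p
  set w : Fin m → E := fun i => e.symm (a i) with hw
  have hwmem : ∀ i, w i ∈ K p := by
    intro i
    rw [hK, memK]
    intro f hf
    have hcf : Continuous fun x : E × E => fderiv ℝ f x.1 x.2 :=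
      (hS f hf).continuous_fderiv_apply one_ne_zero
    have hwt : Tendsto (fun n => e.symm (v (φ n) i)) atTop (𝓝 (w i)) :=
      (e.symm.continuous.tendsto _).comp (hconv' i)
    have h1 : Tendsto (fun n => fderiv ℝ f (q (φ n)) (e.symm (v (φ n) i))) atTop
        (𝓝 (fderiv ℝ f p (w i))) :=
      (hcf.tendsto _).comp ((hqp.comp hφ.tendsto_atTop).prodMk_nhds hwt)
    have h2 : ∀ n, fderiv ℝ f (q (φ n)) (e.symm (v (φ n) i)) = e.symm (v (φ n) i) := by
      intro n
      obtain ⟨x, hx, hxe⟩ := hvmem (φ n) i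
      have : e.symm (v (φ n) i) = x := by
        rw [← hxe]; exact e.symm_apply_apply x
      rw [this]
      exact (memK (q (φ n)) x).1 hx f hf
    rw [funext h2] at h1
    exact tendsto_nhds_unique h1 hwt
  -- conclude on dimensions
  have hli : LinearIndependent ℝ w := by
    have := haon.linearIndependent
    exact this.map' e.symm.toLinearEquiv.toLinearMap e.symm.toLinearEquiv.ker
  set u : Fin m → ↥(K p) := fun i => ⟨w i, hwmem i⟩ with hu
  have hliu : LinearIndependent ℝ u := by
    have : w = (K p).subtype ∘ u := rfl
    rw [this] at hli
    exact hli.of_comp _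
  simpa using hliu.fintype_card_le_finrank
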